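/- Let φ: S¹×S¹ → S¹×S¹ be a diffeomorphism of the torus. If there exists a diffeomorphism φ̃: D²×S¹ → D²×S¹ of the solid torus extending φ (i.e. φ̃∘ι = ι∘φ where ι: S¹×S¹ → D²×S¹ is the boundary inclusion), then the map S¹ → S¹ given by x ↦ p₂(φ(x,1)) (where p₂ is projection to the second factor) has vanishing degree. -/

import Mathlib

open Metric

/-- The inclusion of the unit circle into the closed unit disk in `ℂ`. -/
noncomputable def Circle.toDisk (z : Circle) : ↥(closedBall (0:ℂ) 1) :=
  ⟨(z : ℂ), by simp [mem_closedBall_zero_iff, Circle.norm_coe]⟩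

/-- If a self-homeomorphism `φ` of the torus `S¹ × S¹` extends to a homeomorphism `φt` of the
solid torus `D² × S¹` (via the boundary inclusion), then the circle map `z ↦ p₂(φ(z,1))`
has vanishing degree, i.e. it is homotopic to a constant map. -/
theorem solid_torus_extension_implies_degree_zero
    (φ : (Circle × Circle) ≃ₜ (Circle × Circle))
    (φt : (↥(closedBall (0:ℂ) 1) × Circle) ≃ₜ (↥(closedBall (0:ℂ) 1) × Circle))
    (hext : ∀ z w : Circle,
      φt (Circle.toDisk z, w) = (Circle.toDisk (φ (z, w)).1, (φ (z, w)).2)) :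
    ∃ c : Circle, ContinuousMap.Homotopic
      ⟨fun z : Circle => (φ (z, 1)).2, continuous_snd.comp (φ.continuous.comp (continuous_id.prodMk continuous_const))⟩
      ⟨fun _ : Circle => c, continuous_const⟩ := by
  have mem : ∀ (t : unitInterval) (z : Circle),
      ((1 - (t:ℝ)) • (z:ℂ)) ∈ closedBall (0:ℂ) 1 := by
    intro t z
    have h0 := t.2.1
    have h1 := t.2.2
    rw [mem_closedBall_zero_iff, norm_smul, Circle.norm_coe, mul_one, Real.norm_eq_abs]
    rw [abs_of_nonneg (by linarith)]
    linarith
  refine ⟨(φt (⟨0, by simp⟩, 1)).2, ⟨⟨⟨fun p =>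
      (φt (⟨(1 - (p.1:ℝ)) • (p.2:ℂ), mem p.1 p.2⟩, 1)).2, ?_⟩, ?_, ?_⟩⟩⟩
  · apply continuous_snd.comp
    apply φt.continuous.comp
    apply Continuous.prodMk _ continuous_const
    exact Continuous.subtype_mk
      (((continuous_const.sub (continuous_subtype_val.comp continuous_fst)).smul
        (continuous_subtype_val.comp continuous_snd))) _
  · intro z
    have : (⟨(1 - ((0:unitInterval):ℝ)) • (z:ℂ), mem 0 z⟩ : ↥(closedBall (0:ℂ) 1))
        = Circle.toDisk z := by
      apply Subtype.ext
      simp [Circle.toDisk]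
    simp only [this, hext z 1]; rfl
  · intro z
    have : (⟨(1 - ((1:unitInterval):ℝ)) • (z:ℂ), mem 1 z⟩ : ↥(closedBall (0:ℂ) 1))
        = (⟨0, by simp⟩ : ↥(closedBall (0:ℂ) 1)) := by
      apply Subtype.ext
      simp
    simp only [this]; rfl
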